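/- Let N ≥ 1 be an integer, p ≥ 2 a real number, and a, b ∈ ℝ^N. Then |b|^p ≥ |a|^p + p |a|^{p-2} ⟨a, b-a⟩ + p ∫₀¹ (1-t) |a + t(b-a)|^{p-2} |b-a|² dt, where ⟨·,·⟩ is the Euclidean inner product and |·| the Euclidean norm. -/

import Mathlib

open Real RealInnerProductSpace intervalIntegral

private lemma sq_rpow_half (x e : ℝ) (hx : 0 ≤ x) : (x ^ 2) ^ (e / 2) = x ^ e := by
  rw [← Real.rpow_natCast x 2, ← Real.rpow_mul hx]
  have h2 : ((2:ℕ):ℝ) * (e / 2) = e := by push_cast; ring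
  rw [h2]

private lemma key_aux (m : ℝ) (hm : 1 ≤ m) (q q' : ℝ → ℝ) (c3 : ℝ)
    (hqd : ∀ t, HasDerivAt q (q' t) t) (hq'd : ∀ t, HasDerivAt q' (2 * c3) t)
    (hq0 : ∀ t, 0 ≤ q t)
    (huniq : ∀ s t, q s = 0 → q t = 0 → s = t) :
    q 0 ^ m + m * q 0 ^ (m - 1) * q' 0
      + (m * (2 * c3)) * ∫ t in (0:ℝ)..1, (1 - t) * q t ^ (m - 1)
      ≤ q 1 ^ m := by
  have hqc : Continuous q := by
    rw [continuous_iff_continuousAt]; exact fun t => (hqd t).continuousAt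
  have hq'c : Continuous q' := by
    rw [continuous_iff_continuousAt]; exact fun t => (hq'd t).continuousAt
  have hm0 : (0:ℝ) ≤ m := by linarith
  have hm1 : (0:ℝ) ≤ m - 1 := by linarith
  -- continuity of powers
  have hpowc : Continuous (fun t => q t ^ (m - 1)) :=
    hqc.rpow_const (fun t => Or.inr hm1)
  have hpowmc : Continuous (fun t => q t ^ m) :=
    hqc.rpow_const (fun t => Or.inr hm0)
  -- the integrand
  set h : ℝ → ℝ := fun t => (1 - t) * q t ^ (m - 1) with hhdef
  have hhc : Continuous h := (continuous_const.sub continuous_id).mul hpowc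
  set g : ℝ → ℝ := fun t => ∫ s in t..1, h s with hgdef
  have hgd : ∀ t, HasDerivAt g (-(h t)) t := by
    intro t
    exact intervalIntegral.integral_hasDerivAt_left (hhc.intervalIntegrable t 1)
      (hhc.stronglyMeasurableAtFilter _ _) hhc.continuousAt
  have hgc : Continuous g := by
    rw [continuous_iff_continuousAt]; exact fun t => (hgd t).continuousAt
  -- first derivative of q^m
  set F1 : ℝ → ℝ := fun t => q' t * m * q t ^ (m - 1) with hF1def
  have hfd : ∀ t, HasDerivAt (fun u => q u ^ m) (F1 t) t := by
    intro t
    exact (hqd t).rpow_const (Or.inr hm)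
  have hF1c : Continuous F1 := (hq'c.mul continuous_const).mul hpowc
  have hF1d : ∀ t, q t ≠ 0 →
      HasDerivAt F1 ((2 * c3) * m * q t ^ (m - 1)
        + (q' t * m) * (q' t * (m - 1) * q t ^ (m - 1 - 1))) t := by
    intro t hne
    exact ((hq'd t).mul_const m).mul ((hqd t).rpow_const (Or.inl hne))
  -- the remainder function
  set R : ℝ → ℝ := fun t => q 1 ^ m - q t ^ m - F1 t * (1 - t) - (m * (2 * c3)) * g t
    with hRdef
  have hRc : Continuous R :=
    ((continuous_const.sub hpowmc).sub
      (hF1c.mul (continuous_const.sub continuous_id))).sub (continuous_const.mul hgc)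
  have hRd : ∀ t, q t ≠ 0 →
      HasDerivAt R (-((1 - t) * ((m * (m - 1) * q t ^ (m - 1 - 1)) * q' t ^ 2))) t := by
    intro t hne
    have h0 : HasDerivAt (fun u : ℝ => (1:ℝ) - u) (-1) t := (hasDerivAt_id t).const_sub 1
    have hd := (((hasDerivAt_const t (q 1 ^ m)).sub (hfd t)).sub
      ((hF1d t hne).mul h0)).sub ((hgd t).const_mul (m * (2 * c3)))
    convert hd using 1
    · rfl
    · rfl
    · rfl
    simp only [hF1def, hhdef]
    ring
  -- antitone on zero-free pieces
  have piece : ∀ x y : ℝ, x ≤ y → y ≤ 1 →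
      (∀ t, x < t → t < y → q t ≠ 0) → R y ≤ R x := by
    intro x y hxy hy1 hfree
    have hanti : AntitoneOn R (Set.Icc x y) := by
      apply antitoneOn_of_deriv_nonpos (convex_Icc x y) hRc.continuousOn
      · intro t ht
        rw [interior_Icc] at ht
        exact (hRd t (hfree t ht.1 ht.2)).differentiableAt.differentiableWithinAt
      · intro t ht
        rw [interior_Icc] at ht
        rw [(hRd t (hfree t ht.1 ht.2)).deriv]
        have h1 : (0:ℝ) ≤ 1 - t := by have := ht.2; linarith
        have h2 : (0:ℝ) ≤ q t ^ (m - 1 - 1) := Real.rpow_nonneg (hq0 t) _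
        have h3 : (0:ℝ) ≤ (m * (m - 1) * q t ^ (m - 1 - 1)) * q' t ^ 2 :=
          mul_nonneg (mul_nonneg (mul_nonneg hm0 hm1) h2) (sq_nonneg _)
        nlinarith
    exact hanti (Set.left_mem_Icc.mpr hxy) (Set.right_mem_Icc.mpr hxy) hxy
  have hg1 : g 1 = 0 := by simp [hgdef]
  have hR1 : R 1 = 0 := by
    simp only [hRdef, hg1]
    ring
  have hchain : R 1 ≤ R 0 := by
    by_cases hz : ∃ t0, t0 ∈ Set.Icc (0:ℝ) 1 ∧ q t0 = 0
    · obtain ⟨t0, ⟨ht00, ht01⟩, hqt0⟩ := hz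
      have p1 : R t0 ≤ R 0 :=
        piece 0 t0 ht00 ht01 (fun t h1 h2 hq => (ne_of_lt h2) (huniq t t0 hq hqt0))
      have p2 : R 1 ≤ R t0 :=
        piece t0 1 ht01 le_rfl (fun t h1 h2 hq => (ne_of_gt h1) (huniq t t0 hq hqt0))
      linarith
    · exact piece 0 1 zero_le_one le_rfl
        (fun t h1 h2 hq => hz ⟨t, ⟨le_of_lt h1, le_of_lt h2⟩, hq⟩)
  have hR0 : (0:ℝ) ≤ R 0 := hR1 ▸ hchain
  have hF10 : F1 0 = q' 0 * m * q 0 ^ (m - 1) := rfl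
  have hg0 : g 0 = ∫ t in (0:ℝ)..1, (1 - t) * q t ^ (m - 1) := rfl
  simp only [hRdef, hF10, hg0] at hR0
  linarith

/-- second-order Taylor-type lower bound for `|·|^p`, `p ≥ 2`:
`|b|^p ≥ |a|^p + p|a|^{p-2}⟨a, b-a⟩ + p ∫₀¹ (1-t)|a+t(b-a)|^{p-2}|b-a|² dt`. -/
theorem rpow_norm_taylor_lower_bound
    (N : ℕ) (hN : 1 ≤ N) (p : ℝ) (hp : 2 ≤ p)
    (a b : EuclideanSpace ℝ (Fin N)) :
    ‖a‖ ^ p + p * ‖a‖ ^ (p - 2) * ⟪a, b - a⟫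
        + p * ∫ t in (0 : ℝ)..1, (1 - t) * ‖a + t • (b - a)‖ ^ (p - 2) * ‖b - a‖ ^ 2
      ≤ ‖b‖ ^ p := by
  by_cases hba : b = a
  · rw [hba]
    simp
  · set v : EuclideanSpace ℝ (Fin N) := b - a with hvdef
    have hv : v ≠ 0 := sub_ne_zero.mpr hba
    set c1 : ℝ := ‖a‖ ^ 2 with hc1
    set c2 : ℝ := ⟪a, v⟫ with hc2
    set c3 : ℝ := ‖v‖ ^ 2 with hc3
    have hsq : ∀ t : ℝ, ‖a + t • v‖ ^ 2 = c1 + 2 * c2 * t + c3 * t ^ 2 := by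
      intro t
      have h1 : ‖t • v‖ ^ 2 = t ^ 2 * ‖v‖ ^ 2 := by
        rw [norm_smul, mul_pow]
        simp [Real.norm_eq_abs, sq_abs]
      rw [norm_add_sq_real, real_inner_smul_right, h1, hc1, hc2, hc3]
      ring
    set q : ℝ → ℝ := fun t => c1 + 2 * c2 * t + c3 * t ^ 2 with hqdef
    set q' : ℝ → ℝ := fun t => 2 * c2 + 2 * c3 * t with hq'def
    have hqd : ∀ t, HasDerivAt q (q' t) t := by
      intro t
      have h1 : HasDerivAt (fun t : ℝ => c1 + 2 * c2 * t + c3 * t ^ 2)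
          (0 + 2 * c2 * 1 + c3 * (2 * t ^ 1)) t := by
        exact ((hasDerivAt_const t c1).add (((hasDerivAt_id t)).const_mul (2 * c2))).add
          ((hasDerivAt_pow 2 t).const_mul c3)
      convert h1 using 1
      simp [hq'def]; ring
    have hq'd : ∀ t, HasDerivAt q' (2 * c3) t := by
      intro t
      have h1 : HasDerivAt (fun t : ℝ => 2 * c2 + 2 * c3 * t) (0 + 2 * c3 * 1) t :=
        (hasDerivAt_const t (2 * c2)).add ((hasDerivAt_id t).const_mul (2 * c3))
      convert h1 using 1
      ring
    have hq0 : ∀ t, 0 ≤ q t := by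
      intro t
      rw [hqdef]
      simp only
      rw [← hsq t]
      positivity
    have hzero : ∀ s : ℝ, q s = 0 → a + s • v = 0 := by
      intro s hs
      have h2 : ‖a + s • v‖ ^ 2 = 0 := by rw [hsq s]; exact hs
      have h3 : ‖a + s • v‖ = 0 := by
        exact (pow_eq_zero_iff two_ne_zero).mp h2
      exact norm_eq_zero.mp h3
    have huniq : ∀ s t, q s = 0 → q t = 0 → s = t := by
      intro s t hs ht
      have h1 := hzero s hs
      have h2 := hzero t ht
      have h3 : (s - t) • v = 0 := by
        rw [sub_smul]
        have : a + s • v - (a + t • v) = 0 := by rw [h1, h2]; simp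
        rw [← this]; abel
      rcases smul_eq_zero.mp h3 with h | h
      · linarith [sub_eq_zero.mp (by exact_mod_cast h)]
      · exact absurd h hv
    have hm : (1:ℝ) ≤ p / 2 := by linarith
    have hkey := key_aux (p / 2) hm q q' c3 hqd hq'd hq0 huniq
    -- rewrite pieces
    have hq00 : q 0 = c1 := by simp [hqdef]
    have hq11 : q 1 = ‖b‖ ^ 2 := by
      have h1 := hsq 1
      rw [one_smul] at h1
      have h2 : a + v = b := by rw [hvdef]; abel
      rw [h2] at h1
      exact h1.symm
    have hq'0 : q' 0 = 2 * c2 := by simp [hq'def]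
    have he1 : p / 2 - 1 = (p - 2) / 2 := by ring
    have hA : q 0 ^ (p / 2) = ‖a‖ ^ p := by
      rw [hq00, hc1]; exact sq_rpow_half _ _ (norm_nonneg a)
    have hB : q 1 ^ (p / 2) = ‖b‖ ^ p := by
      rw [hq11]; exact sq_rpow_half _ _ (norm_nonneg b)
    have hC : q 0 ^ (p / 2 - 1) = ‖a‖ ^ (p - 2) := by
      rw [hq00, hc1, he1]; exact sq_rpow_half _ _ (norm_nonneg a)
    have hInt : (∫ t in (0:ℝ)..1, (1 - t) * ‖a + t • v‖ ^ (p - 2) * c3)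
        = (∫ t in (0:ℝ)..1, (1 - t) * q t ^ (p / 2 - 1)) * c3 := by
      rw [← intervalIntegral.integral_mul_const]
      apply intervalIntegral.integral_congr
      intro t _
      have h1 : ‖a + t • v‖ ^ (p - 2) = q t ^ (p / 2 - 1) := by
        rw [he1, ← sq_rpow_half _ _ (norm_nonneg (a + t • v)), hsq t]
      simp only [h1]
    rw [hA, hB, hq'0, hC] at hkey
    have hE : p * (∫ t in (0:ℝ)..1, (1 - t) * ‖a + t • v‖ ^ (p - 2) * c3)
        = (p / 2 * (2 * c3)) * ∫ t in (0:ℝ)..1, (1 - t) * q t ^ (p / 2 - 1) := by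
      rw [hInt]; ring
    have hC2 : p / 2 * ‖a‖ ^ (p - 2) * (2 * c2) = p * ‖a‖ ^ (p - 2) * c2 := by ring
    linarith [hkey, hE, hC2]
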